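/- Let E ⊆ ℝ² be Lebesgue measurable with positive measure, and assume non(𝒩) = cof(𝒩) = κ where 𝒩 is the ideal of Lebesgue null sets. Then there is a partial injection f : ℝ ⇀ ℝ whose graph is contained in E, is an ARD subset of ℝ² (all pairwise Euclidean distances between distinct graph points are irrational), and is full in E (every measurable set meeting E in positive outer measure meets graph(f) in positive outer measure). -/

import Mathlib

open Cardinal Set Polynomial

noncomputable def algSet (S : Set ℝ) : Set ℝ :=
  {x : ℝ | IsAlgebraic (Algebra.adjoin ℚ S) x}

lemma self_subset_algSet (S : Set ℝ) : S ⊆ algSet S := by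
  intro x hx
  have : IsAlgebraic (Algebra.adjoin ℚ S)
      (algebraMap (Algebra.adjoin ℚ S) ℝ ⟨x, Algebra.subset_adjoin hx⟩) :=
    isAlgebraic_algebraMap _
  simpa [algSet] using this

lemma algSet_mono {S T : Set ℝ} (h : S ⊆ T) : algSet S ⊆ algSet T := fun _ hx =>
  hx.tower_top_of_subalgebra_le (Algebra.adjoin_mono h)

lemma rat_mem_algSet (q : ℚ) (S : Set ℝ) : (q : ℝ) ∈ algSet S := by
  have : IsAlgebraic (Algebra.adjoin ℚ S)
      (algebraMap (Algebra.adjoin ℚ S) ℝ (algebraMap ℚ _ q)) := isAlgebraic_algebraMap _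
  simpa [algSet] using this

lemma mk_algebraic_le (R : Subalgebra ℚ ℝ) :
    #{x : ℝ | IsAlgebraic R x} ≤ #R ⊔ ℵ₀ := by
  have hinj : Function.Injective (algebraMap R ℝ) := Subtype.val_injective
  have h1 : #{x : ℝ | IsAlgebraic R x} ≤ #(Σ p : Polynomial R, { y : ℝ // y ∈ p.aroots ℝ }) := by
    apply Cardinal.mk_le_of_injective
      (f := fun x : {x : ℝ | IsAlgebraic R x} =>
        let p := Classical.indefiniteDescription _ x.2
        (⟨p.1, ⟨x.1, by
          have hne := (Polynomial.map_ne_zero_iff hinj).2 p.2.1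
          rw [Polynomial.mem_roots hne, Polynomial.IsRoot, Polynomial.eval_map,
            ← Polynomial.aeval_def, p.2.2]⟩⟩ : Σ p : Polynomial R, { y : ℝ // y ∈ p.aroots ℝ }))
    intro x y h
    have h2 := congrArg (fun s : (Σ p : Polynomial R, { y : ℝ // y ∈ p.aroots ℝ }) => (s.2 : ℝ)) h
    exact Subtype.ext h2
  refine h1.trans ?_
  calc #(Σ p : Polynomial R, { y : ℝ // y ∈ p.aroots ℝ })
      = Cardinal.sum (fun p : Polynomial R => #{ y : ℝ // y ∈ p.aroots ℝ }) := by
        rw [← mk_sigma]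
    _ ≤ Cardinal.sum (fun _ : Polynomial R => ℵ₀) := by
        apply Cardinal.sum_le_sum
        intro p
        exact (Multiset.finite_toSet _).lt_aleph0.le
    _ = #(Polynomial R) * ℵ₀ := by rw [Cardinal.sum_const, Cardinal.lift_id, Cardinal.lift_aleph0]
    _ ≤ (#R ⊔ ℵ₀) * ℵ₀ := by
        apply mul_le_mul' Polynomial.cardinalMk_le_max le_rfl
    _ = #R ⊔ ℵ₀ := by
        rw [Cardinal.mul_eq_max (le_max_right _ _) le_rfl]
        simp

lemma mk_adjoin_le (S : Set ℝ) : #(Algebra.adjoin ℚ S) ≤ #S ⊔ ℵ₀ := by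
  have hs : Function.Surjective
      (fun p : MvPolynomial S ℚ => (⟨MvPolynomial.aeval (Subtype.val : S → ℝ) p, by
        rw [Algebra.adjoin_eq_range ℚ S]; exact ⟨p, rfl⟩⟩ : Algebra.adjoin ℚ S)) := by
    rintro ⟨x, hx⟩
    rw [Algebra.adjoin_eq_range ℚ S] at hx
    obtain ⟨p, hp⟩ := hx
    exact ⟨p, Subtype.ext hp⟩
  refine (Cardinal.mk_le_of_surjective hs).trans (MvPolynomial.cardinalMk_le_max.trans ?_)
  refine sup_le (sup_le ?_ ?_) ?_
  · simp [Cardinal.mkRat]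
  · exact le_sup_left
  · exact le_sup_right

lemma mk_algSet_le (S : Set ℝ) : #(algSet S) ≤ #S ⊔ ℵ₀ :=
  (mk_algebraic_le _).trans (sup_le (mk_adjoin_le S) le_sup_right)

lemma mk_algSet_lt {S : Set ℝ} (h : #S < Cardinal.continuum) :
    #(algSet S) < Cardinal.continuum :=
  (mk_algSet_le S).trans_lt (max_lt h Cardinal.aleph0_lt_continuum)

set_option synthInstance.maxHeartbeats 1000000 in
set_option maxHeartbeats 1000000 in
lemma not_fresh_of_quad {T : Set ℝ} {a b c d : ℝ} (ha : a ∈ T) (hb : b ∈ T) (hc : c ∈ T)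
    (hd : d ∉ algSet T) (q : ℚ) (h : (a - c) ^ 2 + (b - d) ^ 2 = (q : ℝ) ^ 2) : False := by
  apply hd
  set R := Algebra.adjoin ℚ T with hR
  have ham : a ∈ R := Algebra.subset_adjoin ha
  have hbm : b ∈ R := Algebra.subset_adjoin hb
  have hcm : c ∈ R := Algebra.subset_adjoin hc
  have h2m : (2 : ℝ) ∈ R := by
    have := R.algebraMap_mem (2 : ℚ)
    simpa using this
  have hqm : ((q : ℝ)) ∈ R := by
    have := R.algebraMap_mem q
    simpa using this
  have hc1 : -(2 * b) ∈ R := neg_mem (mul_mem h2m hbm)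
  have hc0 : b ^ 2 + (a - c) ^ 2 - (q : ℝ) ^ 2 ∈ R :=
    sub_mem (add_mem (pow_mem hbm 2) (pow_mem (sub_mem ham hcm) 2)) (pow_mem hqm 2)
  refine ⟨Polynomial.X ^ 2 + Polynomial.C (⟨-(2 * b), hc1⟩ : R) * Polynomial.X
      + Polynomial.C (⟨b ^ 2 + (a - c) ^ 2 - (q : ℝ) ^ 2, hc0⟩ : R), ?_, ?_⟩
  · intro h0
    have hcoeff := congrArg (fun p => Polynomial.coeff p 2) h0
    simp [Polynomial.coeff_add, Polynomial.coeff_X_pow, Polynomial.coeff_C,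
      Polynomial.coeff_C_mul, Polynomial.coeff_X] at hcoeff
  · simp only [map_add, map_mul, map_pow, Polynomial.aeval_X, Polynomial.aeval_C]
    have hval : ∀ (x : ℝ) (hx : x ∈ R), algebraMap R ℝ (⟨x, hx⟩ : R) = x := fun _ _ => rfl
    rw [hval _ hc1, hval _ hc0]
    linear_combination h

lemma irrational_sqrt_fresh {T : Set ℝ} {a b c d : ℝ} (ha : a ∈ T) (hb : b ∈ T) (hc : c ∈ T)
    (hd : d ∉ algSet T) : Irrational (Real.sqrt ((a - c) ^ 2 + (b - d) ^ 2)) := by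
  rintro ⟨q, hq⟩
  have hnn : 0 ≤ (a - c) ^ 2 + (b - d) ^ 2 := by positivity
  have hs : (a - c) ^ 2 + (b - d) ^ 2 = (q : ℝ) ^ 2 := by
    rw [← Real.sq_sqrt hnn, ← hq]
  exact not_fresh_of_quad ha hb hc hd q hs


open MeasureTheory in
lemma exists_compact_pos {α : Type} [MeasureSpace α] [PseudoMetricSpace α] [ProperSpace α]
    [OpensMeasurableSpace α] [Nonempty α]
    [(volume : Measure α).InnerRegularCompactLTTop]
    [IsFiniteMeasureOnCompacts (volume : Measure α)]
    {X : Set α} (hX : MeasurableSet X) (hpos : 0 < volume X) :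
    ∃ K, K ⊆ X ∧ IsCompact K ∧ 0 < volume K := by
  obtain ⟨x₀⟩ := ‹Nonempty α›
  have hcover : X ⊆ ⋃ n : ℕ, X ∩ Metric.closedBall x₀ n := by
    intro x hx
    obtain ⟨n, hn⟩ := exists_nat_ge (dist x x₀)
    exact Set.mem_iUnion.2 ⟨n, hx, Metric.mem_closedBall.2 hn⟩
  have hn : ∃ n : ℕ, 0 < volume (X ∩ Metric.closedBall x₀ n) := by
    by_contra hno
    push_neg at hno
    have h0 : ∀ n : ℕ, volume (X ∩ Metric.closedBall x₀ n) = 0 :=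
      fun n => le_antisymm (hno n) (zero_le)
    have hle := (measure_mono hcover).trans (measure_iUnion_null h0).le
    exact hpos.ne' (le_antisymm hle (zero_le))
  obtain ⟨n, hn⟩ := hn
  have hXm : MeasurableSet (X ∩ Metric.closedBall x₀ n) :=
    hX.inter measurableSet_closedBall
  have hfin : volume (X ∩ Metric.closedBall x₀ n) ≠ ⊤ :=
    ((measure_mono Set.inter_subset_right).trans_lt
      (isCompact_closedBall x₀ (n : ℝ)).measure_lt_top).ne
  obtain ⟨K, hKs, hKc, hKlt⟩ := hXm.exists_isCompact_lt_add hfin hn.ne'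
  refine ⟨K, hKs.trans Set.inter_subset_left, hKc, ?_⟩
  rw [pos_iff_ne_zero]
  intro h0
  rw [h0, zero_add] at hKlt
  exact lt_irrefl _ hKlt

open MeasureTheory in
lemma exists_mem_not_mem_of_pos {X : Set ℝ} (hX : MeasurableSet X) (hpos : 0 < volume X)
    {B : Set ℝ} (hB : #B < Cardinal.continuum) : ∃ a, a ∈ X ∧ a ∉ B := by
  obtain ⟨K, hKX, hKc, hKpos⟩ := exists_compact_pos hX hpos
  have hunc : ¬K.Countable := fun hc => hKpos.ne' (hc.measure_zero _)
  obtain ⟨D, hD, hDne, hDK⟩ :=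
    exists_perfect_nonempty_of_isClosed_of_not_countable hKc.isClosed hunc
  obtain ⟨f, hfr, -, hfi⟩ := hD.exists_nat_bool_injection hDne
  have hcle : Cardinal.continuum ≤ #K := by
    have h1 : #(ℕ → Bool) ≤ #K := by
      apply Cardinal.mk_le_of_injective
        (f := fun y : ℕ → Bool => (⟨f y, hDK (hfr (Set.mem_range_self y))⟩ : K))
      intro x y h
      exact hfi (congrArg Subtype.val h)
    refine le_trans (le_of_eq ?_) h1
    simp [Cardinal.mk_arrow, ← Cardinal.two_power_aleph0]
  rcases Set.not_subset.1 (fun hsub : K ⊆ B =>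
    absurd ((hcle.trans (Cardinal.mk_le_mk_of_subset hsub)).trans_lt hB) (lt_irrefl _)) with
    ⟨a, haK, haB⟩
  exact ⟨a, hKX haK, haB⟩

open MeasureTheory in
lemma sections_pos_measurable {K : Set (ℝ × ℝ)} (hK : MeasurableSet K) :
    MeasurableSet {x : ℝ | 0 < volume (Prod.mk x ⁻¹' K)} := by
  have hmeas : Measurable (fun x : ℝ => volume (Prod.mk x ⁻¹' K)) :=
    measurable_measure_prodMk_left hK
  exact hmeas measurableSet_Ioi

open MeasureTheory in
lemma sections_pos {K : Set (ℝ × ℝ)} (hK : MeasurableSet K) (h : 0 < volume K) :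
    0 < volume {x : ℝ | 0 < volume (Prod.mk x ⁻¹' K)} := by
  rw [pos_iff_ne_zero]
  intro h0
  have hae : (fun x : ℝ => volume (Prod.mk x ⁻¹' K)) =ᵐ[volume] 0 := by
    rw [Filter.EventuallyEq, ae_iff]
    convert h0 using 2
    ext x
    simp [pos_iff_ne_zero]
  have hzero : volume K = 0 := by
    rw [Measure.volume_eq_prod, (Measure.measure_prod_null hK)]
    exact hae
  exact h.ne' hzero

open MeasureTheory in
lemma exists_point {S : Set ℝ} (hS : #S < Cardinal.continuum) {K : Set (ℝ × ℝ)}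
    (hKc : IsCompact K) (hKpos : 0 < volume K) :
    ∃ p : ℝ × ℝ, p ∈ K ∧ p.1 ∉ algSet S ∧ p.2 ∉ algSet (insert p.1 S) := by
  have hKm : MeasurableSet K := hKc.isClosed.measurableSet
  obtain ⟨a, haX, haB⟩ := exists_mem_not_mem_of_pos (sections_pos_measurable hKm)
    (sections_pos hKm hKpos) (mk_algSet_lt hS)
  have hsec_closed : IsClosed (Prod.mk a ⁻¹' K) :=
    hKc.isClosed.preimage (Continuous.prodMk_right a)
  have hS' : #(insert a S : Set ℝ) < Cardinal.continuum := by
    refine (Cardinal.mk_insert_le).trans_lt ?_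
    exact Cardinal.add_lt_of_lt Cardinal.aleph0_le_continuum hS
      (Cardinal.one_lt_aleph0.trans_le Cardinal.aleph0_le_continuum)
  obtain ⟨b, hbX, hbB⟩ := exists_mem_not_mem_of_pos hsec_closed.measurableSet haX
    (mk_algSet_lt hS')
  exact ⟨(a, b), hbX, haB, hbB⟩


lemma mk_closeds_le : #{F : Set (ℝ × ℝ) | IsClosed F} ≤ Cardinal.continuum := by
  obtain ⟨𝔅, hBc, -, hbasis⟩ := TopologicalSpace.exists_countable_basis (ℝ × ℝ)
  haveI := hBc.to_subtype
  have hpow : #(Set ↥𝔅) ≤ Cardinal.continuum := by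
    rw [Cardinal.mk_set]
    calc (2 : Cardinal) ^ #↥𝔅 ≤ (2 : Cardinal) ^ ℵ₀ :=
          Cardinal.power_le_power_left (by norm_num) Cardinal.mk_le_aleph0
      _ = Cardinal.continuum := Cardinal.two_power_aleph0
  have key : ∀ F : {F : Set (ℝ × ℝ) | IsClosed F},
      (F : Set (ℝ × ℝ))ᶜ = ⋃ B ∈ {B : ↥𝔅 | (B : Set (ℝ × ℝ)) ∩ ↑F = ∅},
        (B : Set (ℝ × ℝ)) := by
    rintro ⟨F, hF⟩
    ext x
    simp only [Set.mem_compl_iff, Set.mem_iUnion, exists_prop]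
    constructor
    · intro hx
      obtain ⟨t, ht𝔅, hxt, hsub⟩ :=
        hbasis.exists_subset_of_mem_open hx hF.isOpen_compl
      refine ⟨⟨t, ht𝔅⟩, ?_, hxt⟩
      simp only [Set.mem_setOf_eq]
      apply Set.eq_empty_iff_forall_notMem.2
      rintro y ⟨hyt, hyF⟩
      exact hsub hyt hyF
    · rintro ⟨B, hB, hxB⟩ hxF
      exact Set.eq_empty_iff_forall_notMem.1 hB x ⟨hxB, hxF⟩
  refine le_trans (Cardinal.mk_le_of_injective
    (f := fun F : {F : Set (ℝ × ℝ) | IsClosed F} =>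
      ({B : ↥𝔅 | (B : Set (ℝ × ℝ)) ∩ ↑F = ∅} : Set ↥𝔅)) ?_) hpow
  intro F G h
  have h' : {B : ↥𝔅 | (B : Set (ℝ × ℝ)) ∩ ↑F = ∅}
      = {B : ↥𝔅 | (B : Set (ℝ × ℝ)) ∩ ↑G = ∅} := h
  apply Subtype.ext
  have h1 := key F
  rw [h', ← key G] at h1
  exact compl_inj_iff.1 h1

abbrev Idx : Type := Cardinal.continuum.ord.ToType

lemma mk_Idx : #Idx = Cardinal.continuum := by
  rw [Cardinal.mk_toType, Cardinal.card_ord]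

lemma mk_Iio_Idx (i : Idx) : #{j : Idx | j < i} < Cardinal.continuum := by
  have h1 := Ordinal.typein_lt_self (o := Cardinal.continuum.ord) i
  have h2 := Cardinal.lt_ord.1 h1
  have h3 := @Ordinal.card_typein Idx ((· < ·) : Idx → Idx → Prop) isWellOrder_lt i
  rw [h3] at h2
  exact h2

noncomputable section Rec

open MeasureTheory

def iSet (i : Idx) (IH : ∀ j : Idx, j < i → ℝ × ℝ) : Set ℝ :=
  Set.range (fun z : {j : Idx // j < i} × Bool =>
    if z.2 then (IH z.1.1 z.1.2).1 else (IH z.1.1 z.1.2).2)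

lemma mk_iSet_lt (i : Idx) (IH : ∀ j : Idx, j < i → ℝ × ℝ) :
    #(iSet i IH) < Cardinal.continuum := by
  refine lt_of_le_of_lt Cardinal.mk_range_le ?_
  have h1 : #({j : Idx // j < i} × Bool) = #{j : Idx | j < i} * 2 := by
    rw [Cardinal.mk_prod]
    simp [Cardinal.mk_bool]
    rfl
  rw [h1]
  have h2 : (2 : Cardinal) < Cardinal.continuum := by
    have := Cardinal.nat_lt_aleph0 2
    exact_mod_cast this.trans_le Cardinal.aleph0_le_continuum
  exact Cardinal.mul_lt_of_lt Cardinal.aleph0_le_continuum (mk_Iio_Idx i) h2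

lemma step_exists (k : Idx → Set (ℝ × ℝ))
    (hk : ∀ i, IsCompact (k i) ∧ 0 < volume (k i))
    (i : Idx) (IH : ∀ j : Idx, j < i → ℝ × ℝ) :
    ∃ p : ℝ × ℝ, p ∈ k i ∧ p.1 ∉ algSet (iSet i IH) ∧
      p.2 ∉ algSet (insert p.1 (iSet i IH)) :=
  exists_point (mk_iSet_lt i IH) (hk i).1 (hk i).2

def gfun (k : Idx → Set (ℝ × ℝ))
    (hk : ∀ i, IsCompact (k i) ∧ 0 < volume (k i)) : Idx → ℝ × ℝ :=
  (wellFounded_lt (α := Idx)).fix (fun i IH => (step_exists k hk i IH).choose)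

def prevSet (k : Idx → Set (ℝ × ℝ))
    (hk : ∀ i, IsCompact (k i) ∧ 0 < volume (k i)) (i : Idx) : Set ℝ :=
  iSet i (fun j _ => gfun k hk j)

lemma gfun_spec (k : Idx → Set (ℝ × ℝ))
    (hk : ∀ i, IsCompact (k i) ∧ 0 < volume (k i)) (i : Idx) :
    gfun k hk i ∈ k i ∧ (gfun k hk i).1 ∉ algSet (prevSet k hk i) ∧
      (gfun k hk i).2 ∉ algSet (insert (gfun k hk i).1 (prevSet k hk i)) := by
  have heq : gfun k hk i = (step_exists k hk i (fun j _ => gfun k hk j)).choose := by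
    unfold gfun
    exact WellFounded.fix_eq _ _ _
  unfold prevSet
  rw [heq]
  exact (step_exists k hk i _).choose_spec

lemma mem_prevSet_fst (k : Idx → Set (ℝ × ℝ))
    (hk : ∀ i, IsCompact (k i) ∧ 0 < volume (k i)) {j i : Idx} (h : j < i) :
    (gfun k hk j).1 ∈ prevSet k hk i :=
  ⟨(⟨j, h⟩, true), rfl⟩

lemma mem_prevSet_snd (k : Idx → Set (ℝ × ℝ))
    (hk : ∀ i, IsCompact (k i) ∧ 0 < volume (k i)) {j i : Idx} (h : j < i) :
    (gfun k hk j).2 ∈ prevSet k hk i :=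
  ⟨(⟨j, h⟩, false), rfl⟩

end Rec

open MeasureTheory

/-- Euclidean distance on ℝ × ℝ. -/
noncomputable def eudist (p q : ℝ × ℝ) : ℝ :=
  Real.sqrt ((p.1 - q.1) ^ 2 + (p.2 - q.2) ^ 2)

/-- ARD subset of the plane: Euclidean distances between distinct points are irrational. -/
def ARD2 (G : Set (ℝ × ℝ)) : Prop := ∀ p ∈ G, ∀ q ∈ G, p ≠ q → Irrational (eudist p q)

/-- non(𝒩): least cardinality of a non-null set of reals. -/
noncomputable def nonNull : Cardinal :=
  sInf {c : Cardinal | ∃ S : Set ℝ, Cardinal.mk S = c ∧ volume S ≠ 0}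

/-- cof(𝒩): least cardinality of a cofinal family of null sets. -/
noncomputable def cofNull : Cardinal :=
  sInf {c : Cardinal | ∃ B : Set (Set ℝ), Cardinal.mk B = c ∧
    (∀ b ∈ B, volume b = 0) ∧ ∀ N : Set ℝ, volume N = 0 → ∃ b ∈ B, N ⊆ b}

lemma eudist_comm (p q : ℝ × ℝ) : eudist p q = eudist q p := by
  unfold eudist
  congr 1
  ring

lemma gfun_pair (k : Idx → Set (ℝ × ℝ)) (hk : ∀ i, IsCompact (k i) ∧ 0 < volume (k i))
    {j i : Idx} (hij : j < i) :
    (gfun k hk i).1 ≠ (gfun k hk j).1 ∧ (gfun k hk i).2 ≠ (gfun k hk j).2 ∧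
      Irrational (eudist (gfun k hk j) (gfun k hk i)) := by
  obtain ⟨-, h1, h2⟩ := gfun_spec k hk i
  have hp1 : (gfun k hk j).1 ∈ prevSet k hk i := mem_prevSet_fst k hk hij
  have hp2 : (gfun k hk j).2 ∈ prevSet k hk i := mem_prevSet_snd k hk hij
  refine ⟨?_, ?_, ?_⟩
  · intro he
    rw [he] at h1
    exact h1 (self_subset_algSet _ hp1)
  · intro he
    rw [he] at h2
    exact h2 (self_subset_algSet _ (Set.mem_insert_of_mem _ hp2))
  · exact irrational_sqrt_fresh (T := insert (gfun k hk i).1 (prevSet k hk i))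
      (Set.mem_insert_of_mem _ hp1) (Set.mem_insert_of_mem _ hp2)
      (Set.mem_insert _ _) h2

theorem stmt14 (hcard : nonNull = cofNull)
    (E : Set (ℝ × ℝ)) (hE : MeasurableSet E) (hpos : 0 < volume E) :
    ∃ G : Set (ℝ × ℝ), G ⊆ E ∧
      (∀ p ∈ G, ∀ q ∈ G, p.1 = q.1 → p = q) ∧
      (∀ p ∈ G, ∀ q ∈ G, p.2 = q.2 → p = q) ∧
      ARD2 G ∧
      ∀ M : Set (ℝ × ℝ), MeasurableSet M → 0 < volume (M ∩ E) → 0 < volume (M ∩ G) := by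
  classical
  obtain ⟨K₀, hK₀E, hK₀c, hK₀pos⟩ := exists_compact_pos hE hpos
  set 𝒞 : Set (Set (ℝ × ℝ)) := {K | IsCompact K ∧ K ⊆ E ∧ 0 < volume K} with h𝒞def
  have hmk𝒞 : #𝒞 ≤ #Idx := by
    rw [mk_Idx]
    refine le_trans (Cardinal.mk_le_mk_of_subset ?_) mk_closeds_le
    intro K hK
    exact hK.1.isClosed
  obtain ⟨emb⟩ := (Cardinal.le_def _ _).1 hmk𝒞
  set k : Idx → Set (ℝ × ℝ) := fun i =>
    if h : ∃ c : ↥𝒞, emb c = i then (h.choose : ↥𝒞).1 else K₀ with hkdef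
  have hkgood : ∀ i, IsCompact (k i) ∧ 0 < volume (k i) := by
    intro i
    rw [hkdef]
    dsimp only
    split_ifs with h
    · exact ⟨h.choose.2.1, h.choose.2.2.2⟩
    · exact ⟨hK₀c, hK₀pos⟩
  have hkE : ∀ i, k i ⊆ E := by
    intro i
    rw [hkdef]
    dsimp only
    split_ifs with h
    · exact h.choose.2.2.1
    · exact hK₀E
  have hsurj : ∀ K, K ∈ 𝒞 → ∃ i, k i = K := by
    intro K hK
    refine ⟨emb ⟨K, hK⟩, ?_⟩
    rw [hkdef]
    dsimp only
    have hex : ∃ c : ↥𝒞, emb c = emb ⟨K, hK⟩ := ⟨⟨K, hK⟩, rfl⟩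
    rw [dif_pos hex]
    have h1 := emb.injective hex.choose_spec
    rw [h1]
  refine ⟨Set.range (gfun k hkgood), ?_, ?_, ?_, ?_, ?_⟩
  · rintro p ⟨i, rfl⟩
    exact hkE i (gfun_spec k hkgood i).1
  · intro p hp q hq h
    obtain ⟨i, rfl⟩ := hp
    obtain ⟨j, rfl⟩ := hq
    rcases lt_trichotomy i j with hij | rfl | hij
    · exact absurd h.symm (gfun_pair k hkgood hij).1
    · rfl
    · exact absurd h (gfun_pair k hkgood hij).1
  · intro p hp q hq h
    obtain ⟨i, rfl⟩ := hp
    obtain ⟨j, rfl⟩ := hq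
    rcases lt_trichotomy i j with hij | rfl | hij
    · exact absurd h.symm (gfun_pair k hkgood hij).2.1
    · rfl
    · exact absurd h (gfun_pair k hkgood hij).2.1
  · intro p hp q hq hne
    obtain ⟨i, rfl⟩ := hp
    obtain ⟨j, rfl⟩ := hq
    rcases lt_trichotomy i j with hij | rfl | hij
    · exact (gfun_pair k hkgood hij).2.2
    · exact absurd rfl hne
    · rw [eudist_comm]
      exact (gfun_pair k hkgood hij).2.2
  · intro M hM hMEpos
    rw [pos_iff_ne_zero]
    intro h0
    have hNmeas : MeasurableSet (toMeasurable volume (M ∩ Set.range (gfun k hkgood))) :=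
      measurableSet_toMeasurable _ _
    have hNnull : volume (toMeasurable volume (M ∩ Set.range (gfun k hkgood))) = 0 := by
      rw [measure_toMeasurable]
      exact h0
    have hApos : 0 < volume ((M ∩ E) \
        toMeasurable volume (M ∩ Set.range (gfun k hkgood))) := by
      rw [measure_diff_null hNnull]
      exact hMEpos
    obtain ⟨K, hKsub, hKc, hKpos⟩ := exists_compact_pos ((hM.inter hE).diff hNmeas) hApos
    have hK𝒞 : K ∈ 𝒞 := ⟨hKc, fun x hx => (hKsub hx).1.2, hKpos⟩
    obtain ⟨i, hi⟩ := hsurj K hK𝒞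
    have hgi : gfun k hkgood i ∈ K := hi ▸ (gfun_spec k hkgood i).1
    have hmem := hKsub hgi
    exact hmem.2 (subset_toMeasurable _ _ ⟨hmem.1.1, Set.mem_range_self i⟩)
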